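/- If X is a strongly shortcut metric space, then there exists L > 1 such that any metric space Y admitting, for some C > 0 and some scaling factor t > 0, a map f : Y → X with t·d_Y(y,y')/L − C ≤ d_X(f(y),f(y')) ≤ L·t·d_Y(y,y') + C and C-dense image, is also strongly shortcut. -/
import Mathlib


def cycDist (n i j : ℕ) : ℕ :=
  min (max i j - min i j) (n - (max i j - min i j))

def StronglyShortcutSpace (X : Type*) [MetricSpace X] : Prop :=
  ∃ K : ℝ, 1 < K ∧ ∃ n : ℕ, 3 ≤ n ∧ ∃ M : ℝ, 0 < M ∧ ∀ l : ℝ, M ≤ l →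
    ¬ ∃ f : Fin n → X, ∀ i j : Fin n,
      l * (cycDist n i.1 j.1 : ℝ) / K ≤ dist (f i) (f j) ∧
      dist (f i) (f j) ≤ K * (l * (cycDist n i.1 j.1 : ℝ))

set_option maxHeartbeats 1000000 in
theorem stronglyShortcut_of_quasiIsometry_up_to_scaling (X : Type*) [MetricSpace X]
    (hX : StronglyShortcutSpace X) :
    ∃ L : ℝ, 1 < L ∧ ∀ (Y : Type) [MetricSpace Y], ∀ (C t : ℝ) (f : Y → X),
      0 < C → 0 < t →
      (∀ y y' : Y, t * dist y y' / L - C ≤ dist (f y) (f y') ∧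
        dist (f y) (f y') ≤ L * (t * dist y y') + C) →
      (∀ x : X, ∃ y : Y, dist x (f y) ≤ C) →
      StronglyShortcutSpace Y := by
  obtain ⟨K, hK, n, hn, M, hM, hX'⟩ := hX
  have hK0 : (0:ℝ) < K := by linarith
  refine ⟨(K+1)/2, by linarith, ?_⟩
  intro Y _ C t f hC ht hf _hdense
  set L : ℝ := (K+1)/2 with hLdef
  have hL0 : (0:ℝ) < L := by rw [hLdef]; linarith
  set K' : ℝ := (3*K+1)/(2*(K+1)) with hK'def
  have hK'1 : 1 < K' := by
    rw [hK'def, lt_div_iff₀ (by linarith)]; linarith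
  have hK'0 : (0:ℝ) < K' := by linarith
  set P : ℝ := L * K' with hPdef
  have hP : P = (3*K+1)/4 := by
    rw [hPdef, hLdef, hK'def]; field_simp; ring
  have hP1 : (1:ℝ) < P := by rw [hP]; rw [lt_div_iff₀ (by norm_num)]; linarith
  have hPK : P < K := by rw [hP]; rw [div_lt_iff₀ (by norm_num)]; linarith
  have hKP : (0:ℝ) < K - P := by linarith
  set MY : ℝ := max (M/t) (C*K*P/((K-P)*t)) + 1 with hMYdef
  have hMY0 : 0 < MY := by
    have h1 : 0 < M/t := div_pos hM ht
    have := le_max_left (M/t) (C*K*P/((K-P)*t))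
    rw [hMYdef]; linarith
  refine ⟨K', hK'1, n, hn, MY, hMY0, ?_⟩
  rintro l hl ⟨g, hg⟩
  have hl0 : 0 < l := lt_of_lt_of_le hMY0 hl
  have hlM : M / t ≤ l := by
    have := le_max_left (M/t) (C*K*P/((K-P)*t)); rw [hMYdef] at hl; linarith
  have htlM : M ≤ t * l := by
    rw [div_le_iff₀ ht] at hlM; linarith
  have hcond : C*K*P ≤ t*l*(K-P) := by
    have h2 : C*K*P/((K-P)*t) ≤ l := by
      have := le_max_right (M/t) (C*K*P/((K-P)*t)); rw [hMYdef] at hl; linarith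
    rw [div_le_iff₀ (by positivity)] at h2; linarith [h2]
  refine hX' (t*l) htlM ⟨f ∘ g, fun i j => ?_⟩
  by_cases hij : i = j
  · subst hij
    simp [cycDist, dist_self, mul_zero, zero_div, le_refl]
  · have hc : 1 ≤ cycDist n i.1 j.1 := by
      have hi := i.2; have hj := j.2
      have hne : i.1 ≠ j.1 := fun h => hij (Fin.ext h)
      unfold cycDist; omega
    have hcR : (1:ℝ) ≤ (cycDist n i.1 j.1 : ℝ) := by exact_mod_cast hc
    obtain ⟨hg1, hg2⟩ := hg i j
    obtain ⟨hf1, hf2⟩ := hf (g i) (g j)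
    set c : ℝ := (cycDist n i.1 j.1 : ℝ) with hcdef
    set d : ℝ := dist (g i) (g j) with hddef
    set D : ℝ := dist (f (g i)) (f (g j)) with hDdef
    have hd0 : 0 ≤ d := dist_nonneg
    have hD0 : 0 ≤ D := dist_nonneg
    have hg1' : l * c ≤ d * K' := (div_le_iff₀ hK'0).mp hg1
    have hf1' : t * d ≤ (D + C) * L := (div_le_iff₀ hL0).mp (by linarith)
    have hP0 : (0:ℝ) < L * K' := mul_pos hL0 hK'0
    have hcond' : C * K * (L * K') ≤ t * l * (K - L * K') := by
      rw [← hPdef]; exact hcond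
    have hKP' : (0:ℝ) < K - L * K' := by rw [← hPdef]; exact hKP
    have hP1' : (1:ℝ) < L * K' := by rw [← hPdef]; exact hP1
    have h4 : C * K * (L * K') ≤ t * l * c * (K - L * K') := by
      have hx := mul_nonneg (mul_nonneg (by linarith : (0:ℝ) ≤ c - 1)
        (mul_pos ht hl0).le) hKP'.le
      nlinarith [hx, hcond']
    constructor
    · show t * l * c / K ≤ D
      rw [div_le_iff₀ hK0]
      have h1 := mul_le_mul_of_nonneg_left hg1' ht.le
      have h2 := mul_le_mul_of_nonneg_left hf1' hK'0.le
      have h3 : t * l * c ≤ D * (L * K') + C * (L * K') := by nlinarith [h1, h2]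
      have h5 : t * l * c * (L * K') ≤ D * K * (L * K') := by
        have h3K := mul_le_mul_of_nonneg_left h3 hK0.le
        nlinarith [h3K, h4]
      exact le_of_mul_le_mul_right h5 hP0
    · show D ≤ K * (t * l * c)
      have h6 := mul_le_mul_of_nonneg_left hg2 (mul_pos hL0 ht).le
      have hKgt := mul_lt_mul_of_pos_left hP1' hK0
      have h7 : C ≤ C * K * (L * K') := by nlinarith [hKgt, hC, hK]
      nlinarith [h6, h7, h4, hf2]
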